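/- The flip graph of triangulations of a convex polygon with n ≥ 3 vertices is connected: any triangulation can be transformed into any other by a finite sequence of flips. -/

import Mathlib

open scoped Classical

/-- `(a, b)` is a diagonal of the convex `n`-gon with vertices `0, …, n-1`
(pairs of non-adjacent vertices, written with `a < b`). -/
def IsDiag (n a b : ℕ) : Prop :=
  a < b ∧ b < n ∧ a + 2 ≤ b ∧ ¬(a = 0 ∧ b = n - 1)

/-- Two diagonals (as sorted pairs) of a convex polygon cross, i.e. their
endpoint pairs interleave in the cyclic order. -/
def Cross (p q : ℕ × ℕ) : Prop :=
  (p.1 < q.1 ∧ q.1 < p.2 ∧ p.2 < q.2) ∨ (q.1 < p.1 ∧ p.1 < q.2 ∧ q.2 < p.2)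

/-- `T` is a triangulation of the convex `n`-gon: a maximal set of pairwise
non-crossing diagonals. -/
def IsTriangulation (n : ℕ) (T : Finset (ℕ × ℕ)) : Prop :=
  (∀ p ∈ T, IsDiag n p.1 p.2) ∧
  (∀ p ∈ T, ∀ q ∈ T, p ≠ q → ¬ Cross p q) ∧
  (∀ p : ℕ × ℕ, IsDiag n p.1 p.2 → p ∉ T → ∃ q ∈ T, Cross p q)

/-- `T'` is obtained from `T` by a single flip: one diagonal is removed and
another is inserted, the result being again a triangulation. -/
def Flip (n : ℕ) (T T' : Finset (ℕ × ℕ)) : Prop :=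
  IsTriangulation n T ∧ IsTriangulation n T' ∧
  ∃ d d', d ∈ T ∧ d' ∉ T ∧ T' = insert d' (T.erase d)

/-- There is a sequence of exactly `k` flips transforming `T` into `T'`. -/
def FlipSeq (n k : ℕ) (T T' : Finset (ℕ × ℕ)) : Prop :=
  ∃ s : ℕ → Finset (ℕ × ℕ), s 0 = T ∧ s k = T' ∧ ∀ i < k, Flip n (s i) (s (i + 1))



-- auxiliary
lemma cross_symm {p q : ℕ × ℕ} (h : Cross p q) : Cross q p := by
  unfold Cross at *; omega

lemma flip_symm {n : ℕ} {T T' : Finset (ℕ × ℕ)} (h : Flip n T T') : Flip n T' T := by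
  obtain ⟨h1, h2, d, d', hd, hd', rfl⟩ := h
  refine ⟨h2, h1, d', d, Finset.mem_insert_self _ _, ?_, ?_⟩
  · intro hmem
    rcases Finset.mem_insert.1 hmem with h | h
    · exact hd' (h ▸ hd)
    · exact (Finset.notMem_erase d T) h
  · have hd'e : d' ∉ T.erase d := fun h => hd' (Finset.mem_of_mem_erase h)
    rw [Finset.erase_insert hd'e, Finset.insert_erase hd]

lemma apex {n : ℕ} {T : Finset (ℕ × ℕ)} (hT : IsTriangulation n T) {u v : ℕ}
    (hu : 1 ≤ u) (huv : (u, v) ∈ T) :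
    ∃ w, u < w ∧ w < v ∧ ((u, w) ∈ T ∨ w = u + 1) ∧ ((w, v) ∈ T ∨ w = v - 1) := by
  obtain ⟨huv1, hvn, huv2, -⟩ := hT.1 _ huv
  simp only at huv1 hvn huv2
  set s : Finset ℕ := (Finset.Ioo u v).filter (fun x => (u, x) ∈ T ∨ x = u + 1) with hs
  have hne : s.Nonempty := ⟨u + 1, by simp [hs, Finset.mem_filter, Finset.mem_Ioo]; omega⟩
  set w := s.max' hne with hw
  have hwmem : w ∈ s := s.max'_mem hne
  simp only [hs, Finset.mem_filter, Finset.mem_Ioo] at hwmem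
  obtain ⟨⟨hw1, hw2⟩, hw3⟩ := hwmem
  refine ⟨w, hw1, hw2, hw3, ?_⟩
  by_contra hcon
  push_neg at hcon
  obtain ⟨hwvT, hwv⟩ := hcon
  have hdiag : IsDiag n w v := ⟨hw2, hvn, by omega, by omega⟩
  obtain ⟨⟨c, d⟩, hq, hcr⟩ := hT.2.2 (w, v) hdiag hwvT
  obtain ⟨hcd1, hdn, hcd2, -⟩ := hT.1 _ hq
  simp only at hcd1 hdn hcd2
  rcases hcr with ⟨h1, h2, h3⟩ | ⟨h1, h2, h3⟩ <;> simp only at h1 h2 h3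
  · -- w < c < v < d : crosses (u,v)
    exact hT.2.1 _ huv _ hq (by simp; omega) (Or.inl ⟨by simp; omega, by simp; omega, by simp; omega⟩)
  · -- c < w < d < v
    rcases lt_trichotomy c u with hcu | hcu | hcu
    · exact hT.2.1 _ huv _ hq (by simp; omega) (Or.inr ⟨by simp; omega, by simp; omega, by simp; omega⟩)
    · -- c = u : d ∈ s with d > w, contradiction with max
      have hds : d ∈ s := by
        simp only [hs, Finset.mem_filter, Finset.mem_Ioo]
        exact ⟨⟨by omega, h3⟩, Or.inl (hcu ▸ hq)⟩
      have := Finset.le_max' s d hds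
      omega
    · -- u < c < w : crosses (u,w), so w ≠ u+1 and (u,w) ∈ T
      rcases hw3 with h | h
      · exact hT.2.1 _ h _ hq (by simp; omega) (Or.inl ⟨by simp; omega, by simp; omega, by simp; omega⟩)
      · omega

lemma exists_gap {n : ℕ} {T : Finset (ℕ × ℕ)} (hT : IsTriangulation n T)
    (hpos : ∃ p ∈ T, p.1 ≠ 0) :
    ∃ a b, 1 ≤ a ∧ a + 2 ≤ b ∧ b ≤ n - 1 ∧ ((0, a) ∈ T ∨ a = 1) ∧
      ((0, b) ∈ T ∨ b = n - 1) ∧ (∀ k, a < k → k < b → (0, k) ∉ T) ∧ (a, b) ∈ T := by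
  obtain ⟨⟨c, d⟩, hp, hp1⟩ := hpos
  obtain ⟨hcd1, hdn, hcd2, -⟩ := hT.1 _ hp
  simp only at hcd1 hdn hcd2 hp1
  have hc1 : 1 ≤ c := Nat.one_le_iff_ne_zero.2 hp1
  set sa : Finset ℕ := (Finset.Icc 1 c).filter (fun x => (0, x) ∈ T ∨ x = 1) with hsa
  have hane : sa.Nonempty := ⟨1, by simp [hsa, Finset.mem_filter, Finset.mem_Icc]; omega⟩
  set a := sa.max' hane with ha
  have hamem : a ∈ sa := sa.max'_mem hane
  simp only [hsa, Finset.mem_filter, Finset.mem_Icc] at hamem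
  obtain ⟨⟨ha1, ha2⟩, ha3⟩ := hamem
  set sb : Finset ℕ := (Finset.Icc d (n - 1)).filter (fun x => (0, x) ∈ T ∨ x = n - 1) with hsb
  have hbne : sb.Nonempty := ⟨n - 1, by simp [hsb, Finset.mem_filter, Finset.mem_Icc]; omega⟩
  set b := sb.min' hbne with hb
  have hbmem : b ∈ sb := sb.min'_mem hbne
  simp only [hsb, Finset.mem_filter, Finset.mem_Icc] at hbmem
  obtain ⟨⟨hb1, hb2⟩, hb3⟩ := hbmem
  have hgap : ∀ k, a < k → k < b → (0, k) ∉ T := by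
    intro k hk1 hk2 hkT
    obtain ⟨-, hkn, hk3, hk4⟩ := hT.1 _ hkT
    simp only at hkn hk3 hk4
    rcases lt_trichotomy k c with h | h | h
    · have : k ∈ sa := by
        simp only [hsa, Finset.mem_filter, Finset.mem_Icc]
        exact ⟨⟨by omega, by omega⟩, Or.inl hkT⟩
      have := Finset.le_max' sa k this
      omega
    · subst h
      have : k ∈ sa := by
        simp only [hsa, Finset.mem_filter, Finset.mem_Icc]
        exact ⟨⟨by omega, by omega⟩, Or.inl hkT⟩
      have := Finset.le_max' sa k this
      omega
    · rcases lt_trichotomy k d with h' | h' | h'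
      · -- c < k < d : (0,k) crosses (c,d)
        exact hT.2.1 _ hkT _ hp (by simp; omega) (Or.inl ⟨by simp; omega, by simp; omega, by simp; omega⟩)
      · -- k = d
        have : k ∈ sb := by
          simp only [hsb, Finset.mem_filter, Finset.mem_Icc]
          exact ⟨⟨by omega, by omega⟩, Or.inl hkT⟩
        have := Finset.min'_le sb k this
        omega
      · have : k ∈ sb := by
          simp only [hsb, Finset.mem_filter, Finset.mem_Icc]
          exact ⟨⟨by omega, by omega⟩, Or.inl hkT⟩
        have := Finset.min'_le sb k this
        omega
  have habT : (a, b) ∈ T := by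
    by_contra habT
    have hdiag : IsDiag n a b := ⟨by omega, by omega, by omega, by omega⟩
    obtain ⟨⟨x, y⟩, hq, hcr⟩ := hT.2.2 (a, b) hdiag habT
    obtain ⟨hxy1, hyn, hxy2, -⟩ := hT.1 _ hq
    simp only at hxy1 hyn hxy2
    rcases hcr with ⟨h1, h2, h3⟩ | ⟨h1, h2, h3⟩ <;> simp only at h1 h2 h3
    · -- a < x < b < y : crosses (0,b); b = n-1 impossible since y ≤ n-1
      rcases hb3 with hb0 | hb0
      · exact hT.2.1 _ hb0 _ hq (by simp; omega) (Or.inl ⟨by simp; omega, by simp; omega, by simp; omega⟩)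
      · omega
    · -- x < a < y < b
      rcases Nat.eq_zero_or_pos x with hx0 | hx0
      · subst hx0
        exact hgap y (by omega) (by omega) hq
      · rcases ha3 with ha0 | ha0
        · exact hT.2.1 _ ha0 _ hq (by simp; omega) (Or.inl ⟨by simp; omega, by simp; omega, by simp; omega⟩)
        · omega
  exact ⟨a, b, by omega, by omega, by omega, ha3, hb3, hgap, habT⟩

noncomputable def mu (T : Finset (ℕ × ℕ)) : ℕ := (T.filter (fun p => p.1 ≠ 0)).card

lemma step {n : ℕ} {T : Finset (ℕ × ℕ)} (hT : IsTriangulation n T)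
    (hpos : ∃ p ∈ T, p.1 ≠ 0) : ∃ T', Flip n T T' ∧ mu T' < mu T := by
  obtain ⟨a, b, ha1, hab2, hbn, ha0, hb0, hgap, habT⟩ := exists_gap hT hpos
  obtain ⟨m, hm1, hm2, hma, hmb⟩ := apex hT ha1 habT
  have hn3 : 3 ≤ n := by omega
  -- (0, m) is a diagonal not in T
  have hdiag0m : IsDiag n 0 m := ⟨by omega, by omega, by omega, by omega⟩
  have h0mT : (0, m) ∉ T := hgap m hm1 hm2
  -- the only diagonal of T crossing (0, m) is (a, b)
  have key : ∀ q ∈ T, Cross (0, m) q → q = (a, b) := by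
    rintro ⟨x, y⟩ hq hcr
    obtain ⟨hxy1, hyn, hxy2, -⟩ := hT.1 _ hq
    simp only at hxy1 hyn hxy2
    rcases hcr with ⟨h1, h2, h3⟩ | ⟨h1, h2, h3⟩ <;> simp only at h1 h2 h3
    swap
    · omega
    -- 0 < x < m < y
    have hax : a ≤ x := by
      by_contra hax
      push_neg at hax
      rcases ha0 with ha0 | ha0
      · exact hT.2.1 _ ha0 _ hq (by simp; omega) (Or.inl ⟨by simp; omega, by simp; omega, by simp; omega⟩)
      · omega
    have hyb : y ≤ b := by
      by_contra hyb
      push_neg at hyb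
      rcases hb0 with hb0 | hb0
      · exact hT.2.1 _ hb0 _ hq (by simp; omega) (Or.inl ⟨by simp; omega, by simp; omega, by simp; omega⟩)
      · omega
    rcases Nat.lt_or_ge a x with hax' | hax'
    · -- a < x < m : crosses (a, m)
      exfalso
      rcases hma with hma | hma
      · exact hT.2.1 _ hma _ hq (by simp; omega) (Or.inl ⟨by simp; omega, by simp; omega, by simp; omega⟩)
      · omega
    · have hxa : x = a := by omega
      subst hxa
      rcases Nat.lt_or_ge y b with hyb' | hyb'
      · -- m < y < b : (x, y) crosses (m, b)
        exfalso
        rcases hmb with hmb | hmb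
        · exact hT.2.1 _ hmb _ hq (by simp; omega) (Or.inr ⟨by simp; omega, by simp; omega, by simp; omega⟩)
        · omega
      · have : y = b := by omega
        subst this; rfl
  set T' := insert (0, m) (T.erase (a, b)) with hT'
  have hmemT' : ∀ q ∈ T', q = (0, m) ∨ (q ∈ T ∧ q ≠ (a, b)) := by
    intro q hqT'
    rcases Finset.mem_insert.1 hqT' with h | h
    · exact Or.inl h
    · exact Or.inr ⟨Finset.mem_of_mem_erase h, Finset.ne_of_mem_erase h⟩
  have hinT' : ∀ q ∈ T, q ≠ (a, b) → q ∈ T' := by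
    intro q hq hqne
    exact Finset.mem_insert_of_mem (Finset.mem_erase.2 ⟨hqne, hq⟩)
  have htri' : IsTriangulation n T' := by
    refine ⟨?_, ?_, ?_⟩
    · intro p hp
      rcases hmemT' p hp with h | ⟨h, -⟩
      · subst h; exact hdiag0m
      · exact hT.1 _ h
    · intro p hp q hq hpq hcr
      rcases hmemT' p hp with h1 | ⟨h1, h1'⟩ <;> rcases hmemT' q hq with h2 | ⟨h2, h2'⟩
      · exact hpq (h1.trans h2.symm)
      · subst h1; exact h2' (key q h2 hcr)
      · subst h2; exact h1' (key p h1 (cross_symm hcr))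
      · exact hT.2.1 _ h1 _ h2 hpq hcr
    · rintro ⟨x, y⟩ hdiag hpT'
      obtain ⟨hxy1, hyn, hxy2, hxy4⟩ := hdiag
      simp only at hxy1 hyn hxy2 hxy4
      by_cases hab : (x, y) = (a, b)
      · rw [hab]
        exact ⟨(0, m), Finset.mem_insert_self _ _,
          Or.inr ⟨by simp; omega, by simp; omega, by simp; omega⟩⟩
      · have hpT : (x, y) ∉ T := fun h => hpT' (hinT' _ h hab)
        obtain ⟨q, hq, hcr⟩ := hT.2.2 (x, y) ⟨hxy1, hyn, hxy2, hxy4⟩ hpT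
        by_cases hqab : q = (a, b)
        · subst hqab
          -- (x,y) crosses (a,b)
          rcases hcr with ⟨h1, h2, h3⟩ | ⟨h1, h2, h3⟩ <;> simp only at h1 h2 h3
          · -- x < a < y < b
            rcases Nat.eq_zero_or_pos x with hx0 | hx0
            · -- x = 0, p = (0, y), a < y < b, y ≠ m
              subst hx0
              have hym : y ≠ m := by
                intro h; subst h; exact hpT' (Finset.mem_insert_self _ _)
              rcases Nat.lt_or_ge y m with hym' | hym'
              · -- y < m : crosses (a, m)
                have hmaT : (a, m) ∈ T := by rcases hma with h | h; exacts [h, absurd h (by omega)]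
                exact ⟨(a, m), hinT' _ hmaT (by simp; omega),
                  Or.inl ⟨by simp; omega, by simp; omega, by simp; omega⟩⟩
              · -- y > m : crosses (m, b)
                have hmbT : (m, b) ∈ T := by rcases hmb with h | h; exacts [h, absurd h (by omega)]
                exact ⟨(m, b), hinT' _ hmbT (by simp; omega),
                  Or.inl ⟨by simp; omega, by simp; omega, by simp; omega⟩⟩
            · -- x ≥ 1 : crosses (0, a)
              have haT : (0, a) ∈ T := by rcases ha0 with h | h; exacts [h, absurd h (by omega)]
              exact ⟨(0, a), hinT' _ haT (by simp; omega),
                Or.inr ⟨by simp; omega, by simp; omega, by simp; omega⟩⟩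
          · -- a < x < b < y : crosses (0, b); b = n - 1 impossible
            have hbT : (0, b) ∈ T := by rcases hb0 with h | h; exacts [h, absurd h (by omega)]
            exact ⟨(0, b), hinT' _ hbT (by simp; omega),
              Or.inr ⟨by simp; omega, by simp; omega, by simp; omega⟩⟩
        · exact ⟨q, hinT' _ hq hqab, hcr⟩
  refine ⟨T', ⟨hT, htri', (a, b), (0, m), habT, h0mT, rfl⟩, ?_⟩
  have : T'.filter (fun p => p.1 ≠ 0) = (T.filter (fun p => p.1 ≠ 0)).erase (a, b) := by
    rw [hT', Finset.filter_insert, if_neg (by simp), Finset.filter_erase]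
  rw [mu, mu, this]
  exact Finset.card_erase_lt_of_mem (Finset.mem_filter.2 ⟨habT, by simp; omega⟩)

lemma to_fan {n : ℕ} : ∀ (N : ℕ) (T : Finset (ℕ × ℕ)), IsTriangulation n T → mu T ≤ N →
    ∃ T₀, Relation.ReflTransGen (Flip n) T T₀ ∧ IsTriangulation n T₀ ∧ ∀ p ∈ T₀, p.1 = 0 := by
  intro N
  induction N with
  | zero =>
    intro T hT hmu
    refine ⟨T, Relation.ReflTransGen.refl, hT, ?_⟩
    intro p hp
    by_contra h
    have : p ∈ T.filter (fun p => p.1 ≠ 0) := Finset.mem_filter.2 ⟨hp, h⟩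
    have := Finset.card_pos.2 ⟨p, this⟩
    unfold mu at hmu
    omega
  | succ N ih =>
    intro T hT hmu
    by_cases hpos : ∃ p ∈ T, p.1 ≠ 0
    · obtain ⟨T', hflip, hlt⟩ := step hT hpos
      obtain ⟨T₀, hrt, h₀, hfan⟩ := ih T' hflip.2.1 (by omega)
      exact ⟨T₀, Relation.ReflTransGen.head hflip hrt, h₀, hfan⟩
    · push_neg at hpos
      exact ⟨T, Relation.ReflTransGen.refl, hT, fun p hp => hpos p hp⟩

lemma fan_unique {n : ℕ} {T₁ T₂ : Finset (ℕ × ℕ)} (h₁ : IsTriangulation n T₁)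
    (h₂ : IsTriangulation n T₂) (f₁ : ∀ p ∈ T₁, p.1 = 0) (f₂ : ∀ p ∈ T₂, p.1 = 0) :
    T₁ = T₂ := by
  have key : ∀ S₁ S₂ : Finset (ℕ × ℕ), IsTriangulation n S₁ → IsTriangulation n S₂ →
      (∀ p ∈ S₁, p.1 = 0) → (∀ p ∈ S₂, p.1 = 0) → ∀ p ∈ S₁, p ∈ S₂ := by
    rintro S₁ S₂ hS₁ hS₂ fS₁ fS₂ ⟨x, y⟩ hp
    have hx : x = 0 := fS₁ _ hp
    subst hx
    have hdiag := hS₁.1 _ hp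
    by_contra hnot
    obtain ⟨⟨c, d⟩, hq, hcr⟩ := hS₂.2.2 _ hdiag hnot
    have hc : c = 0 := fS₂ _ hq
    subst hc
    rcases hcr with ⟨h1, h2, h3⟩ | ⟨h1, h2, h3⟩ <;> simp only at h1 h2 h3 <;> omega
  apply Finset.Subset.antisymm <;> intro p hp
  exacts [key T₁ T₂ h₁ h₂ f₁ f₂ p hp, key T₂ T₁ h₂ h₁ f₂ f₁ p hp]


/-- The flip graph of triangulations of a convex polygon with `n ≥ 3` vertices is
connected: any triangulation can be transformed into any other by finitely many flips. -/
theorem flipGraph_connected (n : ℕ) (hn : 3 ≤ n) (T₁ T₂ : Finset (ℕ × ℕ))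
    (h₁ : IsTriangulation n T₁) (h₂ : IsTriangulation n T₂) :
    Relation.ReflTransGen (Flip n) T₁ T₂ := by
  obtain ⟨T₀, hrt₁, hT₀, hf₀⟩ := to_fan (mu T₁) T₁ h₁ le_rfl
  obtain ⟨T₀', hrt₂, hT₀', hf₀'⟩ := to_fan (mu T₂) T₂ h₂ le_rfl
  have heq : T₀ = T₀' := fan_unique hT₀ hT₀' hf₀ hf₀'
  have hsymm : Symmetric (Flip n) := fun _ _ => flip_symm
  refine hrt₁.trans ?_
  rw [heq]
  exact (@Relation.ReflTransGen.stdSymm _ _ ⟨hsymm⟩).symm _ _ hrt₂
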